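/- Frobenius's identity: for n ≥ 1, a parameter c, and commuting variables u_i, v_j, det((1 − c u_i v_j)/(1 − u_i v_j))_{i,j=1}^n = V(u) V(v) (1−c)^{n−1} [ Σ_{m : m_n = 0} s_m(u) s_m(v) + (1−c) Σ_{m : m_n > 0} s_m(u) s_m(v) ], with both sums over partitions m = (m_1 ≥ ... ≥ m_n ≥ 0) with at most n parts. -/

import Mathlib

open scoped Classical

namespace Frob

variable {σ : Type*} {P : Type*} [CommRing P]

/-- Ideal of power series all of whose coefficients at exponents `≤ d` vanish. -/
def Jd (d : σ →₀ ℕ) : Ideal (MvPowerSeries σ P) where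
  carrier := {x | ∀ e ≤ d, MvPowerSeries.coeff e x = 0}
  zero_mem' := by intro e _; simp
  add_mem' := by intro a b ha hb e he; simp [ha e he, hb e he]
  smul_mem' := by
    intro r x hx e he
    rw [smul_eq_mul, MvPowerSeries.coeff_mul]
    refine Finset.sum_eq_zero ?_
    rintro ⟨p, q⟩ hpq
    rw [Finset.HasAntidiagonal.mem_antidiagonal] at hpq
    have hq : q ≤ d := le_trans (le_of_add_le_right hpq.le) he
    rw [hx q hq, mul_zero]

theorem mem_Jd {d : σ →₀ ℕ} {x : MvPowerSeries σ P} :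
    x ∈ Jd d ↔ ∀ e ≤ d, MvPowerSeries.coeff e x = 0 := Iff.rfl

theorem coeff_eq_of_sub_mem_Jd {d : σ →₀ ℕ} {x y : MvPowerSeries σ P}
    (h : x - y ∈ Jd d) : MvPowerSeries.coeff d x = MvPowerSeries.coeff d y := by
  have := (mem_Jd.mp h) d le_rfl
  rw [map_sub, sub_eq_zero] at this
  exact this

theorem mem_Jd_of_mul_unit {d : σ →₀ ℕ} {x w : MvPowerSeries σ P}
    (hw : IsUnit w) (h : x * w ∈ Jd d) : x ∈ Jd d := by
  obtain ⟨u, rfl⟩ := hw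
  have := Ideal.mul_mem_right (↑u⁻¹) _ h
  rwa [mul_assoc, Units.mul_inv, mul_one] at this

theorem monomial_mem_Jd [Fintype σ] {d : σ →₀ ℕ} (f : σ →₀ ℕ) (r : P)
    (hf : (d.sum fun _ e => e) < (f.sum fun _ e => e)) :
    (MvPowerSeries.monomial f r : MvPowerSeries σ P) ∈ Jd d := by
  intro e he
  rw [MvPowerSeries.coeff_monomial, if_neg]
  rintro rfl
  have h1 : (e.sum fun _ k => k) ≤ d.sum fun _ k => k := by
    rw [Finsupp.sum_fintype _ _ (fun _ => rfl), Finsupp.sum_fintype _ _ (fun _ => rfl)]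
    exact Finset.sum_le_sum fun i _ => he i
  omega

theorem prod_monomial {ι : Type*} (s : Finset ι) (g : ι → (σ →₀ ℕ)) :
    (∏ i ∈ s, (MvPowerSeries.monomial (g i) (1 : P))) =
      MvPowerSeries.monomial (∑ i ∈ s, g i) (1 : P) := by
  induction s using Finset.cons_induction with
  | empty => simp [MvPowerSeries.monomial_zero_one]
  | cons a s ha ih =>
      rw [Finset.prod_cons, Finset.sum_cons, ih, MvPowerSeries.monomial_mul_monomial, one_mul]

section Setting

variable (n : ℕ)

abbrev R (n : ℕ) := MvPowerSeries (Fin n ⊕ Fin n) (Polynomial ℤ)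

noncomputable def uu (i : Fin n) : R n := MvPowerSeries.X (Sum.inl i)
noncomputable def vv (j : Fin n) : R n := MvPowerSeries.X (Sum.inr j)
noncomputable def cc : R n := MvPowerSeries.C Polynomial.X

/-- coefficients of the expansion of `(1-c uv)/(1-uv)`. -/
noncomputable def aw (M : ℕ) : R n := if M = 0 then 1 else 1 - cc n

variable {n}

theorem prod_X_pow (g : Fin n → (Fin n ⊕ Fin n)) (k : Fin n → ℕ) :
    (∏ j, (MvPowerSeries.X (g j) : R n) ^ k j) = MvPowerSeries.monomial
      (∑ j, Finsupp.single (g j) (k j)) 1 := by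
  rw [← prod_monomial]
  exact Finset.prod_congr rfl fun j _ => MvPowerSeries.X_pow_eq _ _

theorem sum_single_sum (g : Fin n → (Fin n ⊕ Fin n)) (k : Fin n → ℕ) :
    ((∑ j, Finsupp.single (g j) (k j)).sum fun _ e => e) = ∑ j, k j := by
  rw [Finsupp.sum_fintype _ _ (fun _ => rfl)]
  have h1 : ∀ a : Fin n ⊕ Fin n, (∑ j, Finsupp.single (g j) (k j)) a
      = ∑ j, if g j = a then k j else 0 := by
    intro a
    rw [Finsupp.finset_sum_apply]
    exact Finset.sum_congr rfl fun j _ => Finsupp.single_apply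
  simp_rw [h1]
  rw [Finset.sum_comm]
  refine Finset.sum_congr rfl fun j _ => ?_
  simp

theorem prod_X_pow_mem_Jd (d : (Fin n ⊕ Fin n) →₀ ℕ) (g : Fin n → (Fin n ⊕ Fin n))
    (k : Fin n → ℕ) (hk : (d.sum fun _ e => e) < ∑ j, k j) :
    (∏ j, (MvPowerSeries.X (g j) : R n) ^ k j) ∈ Jd d := by
  rw [prod_X_pow]
  refine monomial_mem_Jd _ _ ?_
  rwa [sum_single_sum]

/-- The determinant `det (X_{g j} ^ (M i))` lies in `Jd d` when `∑ M` exceeds the degree of `d`. -/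
theorem det_X_pow_mem_Jd (d : (Fin n ⊕ Fin n) →₀ ℕ) (g : Fin n → (Fin n ⊕ Fin n))
    (M : Fin n → ℕ) (hk : (d.sum fun _ e => e) < ∑ j, M j) :
    (Matrix.det (Matrix.of fun i j : Fin n =>
      (MvPowerSeries.X (g j) : R n) ^ (M i))) ∈ Jd d := by
  rw [Matrix.det_apply]
  refine Submodule.sum_mem _ fun s _ => Submodule.smul_of_tower_mem _ _ ?_
  have : (∏ j, (Matrix.of fun i j : Fin n => (MvPowerSeries.X (g j) : R n) ^ (M i)) (s j) j)
      = ∏ j, (MvPowerSeries.X (g j) : R n) ^ (M (s j)) := rfl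
  rw [this]
  refine prod_X_pow_mem_Jd d g _ ?_
  rwa [Equiv.sum_comp s M]

end Setting

theorem telescope {A : Type*} [CommRing A] (c s : A) (N : ℕ) :
    (∑ M ∈ Finset.range (N+1), (if M = 0 then (1:A) else 1 - c) * s ^ M) * (1 - s)
      = 1 - c * s - (1 - c) * s ^ (N + 1) := by
  induction N with
  | zero => simp; ring
  | succ N ih =>
      rw [Finset.sum_range_succ, if_neg (Nat.succ_ne_zero N), add_mul, ih]
      ring

section Setting2

variable {n : ℕ}

noncomputable def B' (n N : ℕ) : Matrix (Fin n) (Fin n) (R n) :=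
  Matrix.of fun i j => ∑ M : Fin (N+1), aw n (M:ℕ) * (uu n i * vv n j) ^ (M:ℕ)

theorem isUnit_one_sub_uv (i j : Fin n) : IsUnit (1 - uu n i * vv n j) := by
  rw [MvPowerSeries.isUnit_iff_constantCoeff]
  simp [uu, vv]

theorem uv_pow_mem_Jd (d : (Fin n ⊕ Fin n) →₀ ℕ) (i j : Fin n) :
    (uu n i * vv n j) ^ ((d.sum fun _ e => e) + 1) ∈ Jd d := by
  set N := d.sum fun _ e => e with hN
  rw [mul_pow, uu, vv, MvPowerSeries.X_pow_eq, MvPowerSeries.X_pow_eq,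
    MvPowerSeries.monomial_mul_monomial, one_mul]
  refine monomial_mem_Jd _ _ ?_
  rw [Finsupp.sum_add_index (fun _ _ => rfl) (fun _ _ _ _ => rfl),
    Finsupp.sum_single_index rfl, Finsupp.sum_single_index rfl]
  omega

theorem sub_Bp_mem (d : (Fin n ⊕ Fin n) →₀ ℕ) (i j : Fin n) (b : R n)
    (hb : b * (1 - uu n i * vv n j) = 1 - cc n * uu n i * vv n j) :
    b - B' n (d.sum fun _ e => e) i j ∈ Jd d := by
  set N := d.sum fun _ e => e with hN
  refine mem_Jd_of_mul_unit (isUnit_one_sub_uv i j) ?_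
  rw [sub_mul, hb]
  have hB' : B' n N i j * (1 - uu n i * vv n j)
      = 1 - cc n * (uu n i * vv n j) - (1 - cc n) * (uu n i * vv n j)^(N+1) := by
    show (∑ M : Fin (N+1), aw n (M:ℕ) * (uu n i * vv n j) ^ (M:ℕ)) * _ = _
    rw [Fin.sum_univ_eq_sum_range (fun M => aw n M * (uu n i * vv n j) ^ M) (N+1)]
    exact telescope _ _ N
  rw [hB']
  have heq : (1 - cc n * uu n i * vv n j) -
      (1 - cc n * (uu n i * vv n j) - (1 - cc n) * (uu n i * vv n j)^(N+1))
      = (1 - cc n) * (uu n i * vv n j)^(N+1) := by ring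
  rw [heq]
  exact Ideal.mul_mem_left _ _ (uv_pow_mem_Jd d i j)

theorem det_congr_Jd (d : (Fin n ⊕ Fin n) →₀ ℕ) (A A' : Matrix (Fin n) (Fin n) (R n))
    (h : ∀ i j, A i j - A' i j ∈ Jd d) : A.det - A'.det ∈ Jd d := by
  refine Ideal.Quotient.eq.mp ?_
  rw [RingHom.map_det, RingHom.map_det]
  have : (Ideal.Quotient.mk (Jd d)).mapMatrix A = (Ideal.Quotient.mk (Jd d)).mapMatrix A' := by
    ext i j
    exact Ideal.Quotient.eq.mpr (h i j)
  rw [this]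

noncomputable def F (n N : ℕ) (φ : Fin n → Fin (N+1)) : R n :=
  (∏ i, aw n ((φ i):ℕ) * uu n i ^ ((φ i):ℕ)) *
    (Matrix.of fun i j : Fin n => vv n j ^ ((φ i):ℕ)).det

theorem detBp_expand (N : ℕ) :
    (B' n N).det = ∑ φ : Fin n → Fin (N+1), F n N φ := by
  have rows : (B' n N : Matrix (Fin n) (Fin n) (R n))
      = fun i => ∑ M : Fin (N+1),
          (aw n (M:ℕ) * uu n i ^ (M:ℕ)) • (fun j => vv n j ^ (M:ℕ)) := by
    funext i j
    simp only [B', Matrix.of_apply, Finset.sum_apply, Pi.smul_apply, smul_eq_mul]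
    exact Finset.sum_congr rfl fun M _ => by rw [mul_pow]; ring
  show Matrix.detRowAlternating (B' n N) = _
  rw [rows, ← AlternatingMap.coe_multilinearMap]
  rw [(Matrix.detRowAlternating (R := R n) (n := Fin n)).toMultilinearMap.map_sum
    (g := fun (i : Fin n) (M : Fin (N+1)) => (aw n (M:ℕ) * uu n i ^ (M:ℕ)) • (fun j => vv n j ^ (M:ℕ)))]
  refine Finset.sum_congr rfl fun φ _ => ?_
  refine Eq.trans (MultilinearMap.map_smul_univ
    (Matrix.detRowAlternating (R := R n) (n := Fin n)).toMultilinearMap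
    (fun i => aw n ((φ i):ℕ) * uu n i ^ ((φ i):ℕ)) (fun i j => vv n j ^ ((φ i):ℕ))) ?_
  rw [smul_eq_mul]
  rfl

theorem F_eq_zero_of_not_injective (N : ℕ) (φ : Fin n → Fin (N+1))
    (hφ : ¬ Function.Injective φ) : F n N φ = 0 := by
  rw [Function.not_injective_iff] at hφ
  obtain ⟨a, b, hab, hne⟩ := hφ
  have : (Matrix.of fun i j : Fin n => vv n j ^ ((φ i):ℕ)).det = 0 := by
    refine Matrix.det_zero_of_row_eq hne ?_
    funext j
    simp [Matrix.of_apply, hab]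
  rw [F, this, mul_zero]

theorem sum_perm_F (N : ℕ) (M : Fin n → Fin (N+1)) :
    ∑ σ : Equiv.Perm (Fin n), F n N (M ∘ σ)
      = (∏ i, aw n ((M i):ℕ)) *
        ((Matrix.of fun i j : Fin n => uu n j ^ ((M i):ℕ)).det *
         (Matrix.of fun i j : Fin n => vv n j ^ ((M i):ℕ)).det) := by
  have key : ∀ σ : Equiv.Perm (Fin n), F n N (M ∘ σ)
      = (∏ i, aw n ((M i):ℕ)) *
        ((((Equiv.Perm.sign σ : ℤ) : R n) * ∏ i, uu n i ^ ((M (σ i)):ℕ)) *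
          (Matrix.of fun i j : Fin n => vv n j ^ ((M i):ℕ)).det) := by
    intro σ
    have hdet : (Matrix.of fun i j : Fin n => vv n j ^ (((M ∘ σ) i):ℕ)).det
        = ((Equiv.Perm.sign σ : ℤ) : R n) *
          (Matrix.of fun i j : Fin n => vv n j ^ ((M i):ℕ)).det := by
      have h2 : (Matrix.of fun i j : Fin n => vv n j ^ (((M ∘ σ) i):ℕ))
          = (Matrix.of fun i j : Fin n => vv n j ^ ((M i):ℕ)).submatrix σ id := rfl
      rw [h2, Matrix.det_permute]
    rw [F, hdet, Finset.prod_mul_distrib]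
    rw [show (∏ i, aw n (((M ∘ σ) i):ℕ)) = ∏ i, aw n ((M i):ℕ) from
      Equiv.prod_comp σ (fun k => aw n ((M k):ℕ))]
    simp only [Function.comp_apply]
    ring
  rw [Finset.sum_congr rfl fun σ _ => key σ]
  have udet : (Matrix.of fun i j : Fin n => uu n j ^ ((M i):ℕ)).det
      = ∑ σ : Equiv.Perm (Fin n),
          ((Equiv.Perm.sign σ : ℤ) : R n) * ∏ i, uu n i ^ ((M (σ i)):ℕ) := by
    rw [Matrix.det_apply']
    rfl
  rw [udet]
  conv_rhs => rw [Finset.sum_mul, Finset.mul_sum]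


theorem strictAnti_quant {N : ℕ} {M : Fin n → Fin (N+1)}
    (hM : StrictAnti fun i => ((M i):ℕ)) {a b : Fin n} (hab : a ≤ b) :
    ((M b):ℕ) + ((b:ℕ) - (a:ℕ)) ≤ ((M a):ℕ) := by
  obtain ⟨k, hk⟩ : ∃ k, (b:ℕ) = (a:ℕ) + k := ⟨(b:ℕ) - (a:ℕ), by omega⟩
  induction k generalizing b with
  | zero =>
      have : b = a := Fin.ext (by omega)
      subst this
      omega
  | succ k ih =>
      have hb' : (a:ℕ) + k < n := by have := b.isLt; omega
      set b' : Fin n := ⟨(a:ℕ) + k, hb'⟩ with hb'def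
      have hb'v : ((b' : Fin n) : ℕ) = (a:ℕ) + k := rfl
      have h1 := ih (b := b') (by rw [Fin.le_def, hb'v]; omega) hb'v
      have h2 : ((M b):ℕ) < ((M b'):ℕ) := hM (by rw [Fin.lt_def, hb'v]; omega)
      omega

theorem perm_eq_one_of_strictMono {τ : Equiv.Perm (Fin n)}
    (h : StrictMono (τ : Fin n → Fin n)) : ∀ x, τ x = x := by
  intro x
  haveI : WellFoundedLT (Fin n) := Finite.to_wellFoundedLT
  haveI : WellFoundedGT (Fin n) := Finite.to_wellFoundedGT
  exact le_antisymm h.apply_le h.le_apply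

theorem sum_injective {N : ℕ} {A : Type*} [AddCommMonoid A] (G : (Fin n → Fin (N+1)) → A) :
    ∑ φ : {φ : Fin n → Fin (N+1) // Function.Injective φ}, G φ.1
    = ∑ p : Equiv.Perm (Fin n) ×
        {M : Fin n → Fin (N+1) // StrictAnti fun i => ((M i):ℕ)}, G (p.2.1 ∘ p.1) := by
  have hinj : ∀ (p : Equiv.Perm (Fin n) ×
      {M : Fin n → Fin (N+1) // StrictAnti fun i => ((M i):ℕ)}),
      Function.Injective (p.2.1 ∘ (p.1 : Equiv.Perm (Fin n))) := by
    rintro ⟨σ, M, hM⟩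
    have hMinj : Function.Injective M := by
      intro x y hxy
      exact hM.injective (by simp [hxy])
    exact hMinj.comp σ.injective
  have hbij : Function.Bijective (fun p : Equiv.Perm (Fin n) ×
      {M : Fin n → Fin (N+1) // StrictAnti fun i => ((M i):ℕ)} =>
      (⟨p.2.1 ∘ p.1, hinj p⟩ : {φ : Fin n → Fin (N+1) // Function.Injective φ})) := by
    constructor
    · rintro ⟨σ₁, M₁, hM₁⟩ ⟨σ₂, M₂, hM₂⟩ hpq
      simp only [Subtype.mk.injEq] at hpq
      have happ : ∀ y, M₁ (σ₁ y) = M₂ (σ₂ y) := fun y => congrFun hpq y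
      set τ : Equiv.Perm (Fin n) := σ₁.symm.trans σ₂ with hτ
      have hM1τ : ∀ z, M₁ z = M₂ (τ z) := by
        intro z
        have := happ (σ₁.symm z)
        simpa [hτ] using this
      have hτmono : StrictMono (τ : Fin n → Fin n) := by
        intro z z' hzz
        have h1 : ((M₁ z'):ℕ) < ((M₁ z):ℕ) := hM₁ hzz
        rw [hM1τ z, hM1τ z'] at h1
        exact (StrictAnti.lt_iff_gt hM₂).mp h1
      have hτ1 := perm_eq_one_of_strictMono hτmono
      have hσ : σ₂ = σ₁ := by
        ext y
        have := hτ1 (σ₁ y)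
        have h2 : σ₂ y = σ₁ y := by simpa [hτ] using this
        exact congrArg Fin.val h2
      have hMeq : M₁ = M₂ := by
        funext z
        rw [hM1τ z, hτ1 z]
      subst hσ hMeq
      rfl
    · rintro ⟨φ, hφ⟩
      set τ := Tuple.sort φ with hτ
      have hsm : StrictMono (φ ∘ τ) :=
        (Tuple.monotone_sort φ).strictMono_of_injective (hφ.comp τ.injective)
      set M : Fin n → Fin (N+1) := fun k => φ (τ (Fin.rev k)) with hM
      have hSA : StrictAnti fun i => ((M i):ℕ) := by
        intro a b hab
        have : Fin.rev b < Fin.rev a := Fin.rev_lt_rev.mpr hab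
        have := hsm this
        rw [Fin.lt_def] at this
        simpa [hM] using this
      refine ⟨⟨τ.symm.trans (Fin.revPerm), ⟨M, hSA⟩⟩, ?_⟩
      apply Subtype.ext
      funext x
      simp [hM]
  exact (Fintype.sum_bijective _ hbij _ _ fun p => rfl).symm


theorem prod_aw {N : ℕ} (l : Fin n) (hl : (l:ℕ) = n - 1) (M : Fin n → Fin (N+1))
    (hM : StrictAnti fun i => ((M i):ℕ)) :
    (∏ i, aw n ((M i):ℕ))
      = if ((M l):ℕ) = 0 then (1 - cc n)^(n-1) else (1 - cc n)^n := by
  have hle : ∀ i : Fin n, i ≤ l := fun i => by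
    rw [Fin.le_def, hl]
    have := i.isLt
    omega
  by_cases h0 : ((M l):ℕ) = 0
  · rw [if_pos h0]
    have hker : ∀ i : Fin n, (((M i):ℕ) = 0) ↔ i = l := by
      intro i
      constructor
      · intro hi
        by_contra hne
        have hlt : i < l := lt_of_le_of_ne (hle i) hne
        have h2 : ((M l):ℕ) < ((M i):ℕ) := hM hlt
        omega
      · rintro rfl
        exact h0
    calc ∏ i, aw n ((M i):ℕ) = ∏ i, (if i = l then 1 else (1 - cc n)) := by
          refine Finset.prod_congr rfl fun i _ => ?_
          rw [aw]
          simp only [hker i]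
      _ = (1 - cc n)^(n-1) := by
          rw [← Finset.mul_prod_erase Finset.univ _ (Finset.mem_univ l), if_pos rfl, one_mul]
          rw [Finset.prod_congr rfl
            (fun i hi => if_neg (Finset.mem_erase.mp hi).1), Finset.prod_const]
          rw [Finset.card_erase_of_mem (Finset.mem_univ l), Finset.card_univ, Fintype.card_fin]
  · rw [if_neg h0]
    have hne : ∀ i, ((M i):ℕ) ≠ 0 := by
      intro i
      have h1 : ((M l):ℕ) ≤ ((M i):ℕ) := by
        rcases eq_or_lt_of_le (hle i) with h | h
        · rw [h]
        · exact le_of_lt (hM h)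
      omega
    calc ∏ i, aw n ((M i):ℕ) = ∏ _i : Fin n, (1 - cc n) :=
          Finset.prod_congr rfl fun i _ => if_neg (hne i)
      _ = (1 - cc n)^n := by rw [Finset.prod_const, Finset.card_univ, Fintype.card_fin]

theorem detBp_final {N : ℕ} (l : Fin n) (hl : (l:ℕ) = n - 1) :
    (B' n N).det = ∑ M : Fin n → Fin (N+1),
      if StrictAnti (fun i => ((M i):ℕ)) then
        (if ((M l):ℕ) = 0 then (1 - cc n)^(n-1) else (1 - cc n)^n) *
        ((Matrix.of fun i j : Fin n => uu n j ^ ((M i):ℕ)).det *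
         (Matrix.of fun i j : Fin n => vv n j ^ ((M i):ℕ)).det)
      else 0 := by
  rw [detBp_expand]
  calc ∑ φ : Fin n → Fin (N+1), F n N φ
      = ∑ φ : Fin n → Fin (N+1), if Function.Injective φ then F n N φ else 0 := by
        refine Finset.sum_congr rfl fun φ _ => ?_
        split
        · rfl
        · exact F_eq_zero_of_not_injective N φ (by assumption)
    _ = ∑ φ ∈ Finset.univ.filter (fun φ : Fin n → Fin (N+1) => Function.Injective φ),
          F n N φ := (Finset.sum_filter _ _).symm
    _ = ∑ φ : {φ : Fin n → Fin (N+1) // Function.Injective φ}, F n N φ.1 :=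
        Finset.sum_subtype _ (by simp) _
    _ = ∑ p : Equiv.Perm (Fin n) ×
          {M : Fin n → Fin (N+1) // StrictAnti fun i => ((M i):ℕ)},
          F n N (p.2.1 ∘ p.1) := sum_injective (F n N)
    _ = ∑ M : {M : Fin n → Fin (N+1) // StrictAnti fun i => ((M i):ℕ)},
          ∑ σ : Equiv.Perm (Fin n), F n N (M.1 ∘ σ) := by
        rw [Fintype.sum_prod_type]
        exact Finset.sum_comm
    _ = ∑ M : {M : Fin n → Fin (N+1) // StrictAnti fun i => ((M i):ℕ)},
          (if ((M.1 l):ℕ) = 0 then (1 - cc n)^(n-1) else (1 - cc n)^n) *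
          ((Matrix.of fun i j : Fin n => uu n j ^ ((M.1 i):ℕ)).det *
           (Matrix.of fun i j : Fin n => vv n j ^ ((M.1 i):ℕ)).det) := by
        refine Finset.sum_congr rfl fun M _ => ?_
        rw [sum_perm_F, prod_aw l hl M.1 M.2]
    _ = ∑ M ∈ Finset.univ.filter
          (fun M : Fin n → Fin (N+1) => StrictAnti fun i => ((M i):ℕ)),
          (if ((M l):ℕ) = 0 then (1 - cc n)^(n-1) else (1 - cc n)^n) *
          ((Matrix.of fun i j : Fin n => uu n j ^ ((M i):ℕ)).det *
           (Matrix.of fun i j : Fin n => vv n j ^ ((M i):ℕ)).det) :=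
        by rw [← Finset.sum_subtype_eq_sum_filter, Finset.subtype_univ]
    _ = _ := Finset.sum_filter _ _


theorem bad_term_mem_Jd (d : (Fin n ⊕ Fin n) →₀ ℕ) (k : Fin n → ℕ) (i₀ : Fin n)
    (hk : (d.sum fun _ e => e) < k i₀) (x : R n) :
    (x * ((Matrix.of fun i j : Fin n => uu n j ^ (k i)).det *
      (Matrix.of fun i j : Fin n => vv n j ^ (k i)).det)) ∈ Jd d := by
  refine Ideal.mul_mem_left _ _ (Ideal.mul_mem_right _ _ ?_)
  refine det_X_pow_mem_Jd d Sum.inl k ?_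
  calc (d.sum fun _ e => e) < k i₀ := hk
    _ ≤ ∑ j, k j := Finset.single_le_sum (fun j _ => Nat.zero_le _) (Finset.mem_univ i₀)

open Fin.NatCast in
theorem coeff_match (hn : 1 ≤ n) (d : (Fin n ⊕ Fin n) →₀ ℕ) (l : Fin n)
    (hl : (l:ℕ) = n - 1) :
    (MvPowerSeries.coeff d)
      (∑ m : Fin n → Fin ((d.sum fun _ e => e)+1),
        if Antitone (fun i => ((m i):ℕ)) then
          (if ((m l):ℕ) = 0 then (1 - cc n)^(n-1) else (1 - cc n)^n) *
          ((Matrix.of fun i j : Fin n => uu n j ^ (((m i):ℕ) + (n - 1 - (i:ℕ)))).det *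
           (Matrix.of fun i j : Fin n => vv n j ^ (((m i):ℕ) + (n - 1 - (i:ℕ)))).det)
        else 0)
    = (MvPowerSeries.coeff d)
      (∑ M : Fin n → Fin ((d.sum fun _ e => e)+1),
        if StrictAnti (fun i => ((M i):ℕ)) then
          (if ((M l):ℕ) = 0 then (1 - cc n)^(n-1) else (1 - cc n)^n) *
          ((Matrix.of fun i j : Fin n => uu n j ^ ((M i):ℕ)).det *
           (Matrix.of fun i j : Fin n => vv n j ^ ((M i):ℕ)).det)
        else 0) := by
  set N := d.sum fun _ e => e with hN
  rw [map_sum, map_sum]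
  simp only [apply_ite (MvPowerSeries.coeff d), map_zero]
  rw [← Finset.sum_filter, ← Finset.sum_filter]
  rw [← Finset.sum_filter_add_sum_filter_not
    (Finset.univ.filter fun m : Fin n → Fin (N+1) => Antitone (fun i => ((m i):ℕ)))
    (fun m => ∀ i : Fin n, ((m i):ℕ) + (n - 1 - (i:ℕ)) ≤ N)]
  have hbad : ∑ m ∈ (Finset.univ.filter
        fun m : Fin n → Fin (N+1) => Antitone (fun i => ((m i):ℕ))).filter
        (fun m => ¬ ∀ i : Fin n, ((m i):ℕ) + (n - 1 - (i:ℕ)) ≤ N),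
      (MvPowerSeries.coeff d)
        ((if ((m l):ℕ) = 0 then (1 - cc n)^(n-1) else (1 - cc n)^n) *
          ((Matrix.of fun i j : Fin n => uu n j ^ (((m i):ℕ) + (n - 1 - (i:ℕ)))).det *
           (Matrix.of fun i j : Fin n => vv n j ^ (((m i):ℕ) + (n - 1 - (i:ℕ)))).det)) = 0 := by
    refine Finset.sum_eq_zero fun m hm => ?_
    rw [Finset.mem_filter] at hm
    push_neg at hm
    obtain ⟨i₀, hi₀⟩ := hm.2
    exact (bad_term_mem_Jd d _ i₀ (by omega) _) d le_rfl
  rw [hbad, add_zero, Finset.filter_filter]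
  refine Finset.sum_nbij'
    (fun m k => (((((m k):ℕ) + (n - 1 - (k:ℕ))) : ℕ) : Fin (N+1)))
    (fun M k => (((((M k):ℕ) - (n - 1 - (k:ℕ))) : ℕ) : Fin (N+1))) ?_ ?_ ?_ ?_ ?_
  · -- hi
    intro m hm
    rw [Finset.mem_filter] at hm ⊢
    obtain ⟨-, hA, hg⟩ := hm
    refine ⟨Finset.mem_univ _, ?_⟩
    intro a b hab
    have hva : ((((((m a):ℕ) + (n - 1 - (a:ℕ))) : ℕ) : Fin (N+1)) : ℕ)
        = ((m a):ℕ) + (n - 1 - (a:ℕ)) := Fin.val_cast_of_lt (by have := hg a; omega)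
    have hvb : ((((((m b):ℕ) + (n - 1 - (b:ℕ))) : ℕ) : Fin (N+1)) : ℕ)
        = ((m b):ℕ) + (n - 1 - (b:ℕ)) := Fin.val_cast_of_lt (by have := hg b; omega)
    have hmab : ((m b):ℕ) ≤ ((m a):ℕ) := hA hab.le
    have hab' : (a:ℕ) < (b:ℕ) := hab
    have hbn : (b:ℕ) < n := b.isLt
    simp only [hva, hvb]
    omega
  · -- hj
    intro M hM
    rw [Finset.mem_filter] at hM ⊢
    obtain ⟨-, hSA⟩ := hM
    have hKL : ∀ k : Fin n, (n - 1 - (k:ℕ)) ≤ ((M k):ℕ) := by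
      intro k
      have hkl : k ≤ l := by
        rw [Fin.le_def, hl]
        have := k.isLt
        omega
      have := strictAnti_quant hSA hkl
      rw [hl] at this
      omega
    have hv : ∀ k : Fin n, ((((((M k):ℕ) - (n - 1 - (k:ℕ))) : ℕ) : Fin (N+1)) : ℕ)
        = ((M k):ℕ) - (n - 1 - (k:ℕ)) :=
      fun k => Fin.val_cast_of_lt (by have := (M k).isLt; omega)
    refine ⟨Finset.mem_univ _, ?_, ?_⟩
    · intro a b hab
      rcases eq_or_lt_of_le hab with h | h
      · rw [h]
      · have hq := strictAnti_quant hSA hab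
        have hKLa := hKL a
        have hKLb := hKL b
        have hab' : (a:ℕ) < (b:ℕ) := h
        have hbn : (b:ℕ) < n := b.isLt
        simp only [hv]
        omega
    · intro k
      have := (M k).isLt
      have := hKL k
      rw [hv k]
      omega
  · -- left_inv
    intro m hm
    rw [Finset.mem_filter] at hm
    obtain ⟨-, hA, hg⟩ := hm
    funext k
    have hva : ((((((m k):ℕ) + (n - 1 - (k:ℕ))) : ℕ) : Fin (N+1)) : ℕ)
        = ((m k):ℕ) + (n - 1 - (k:ℕ)) := Fin.val_cast_of_lt (by have := hg k; omega)
    refine Fin.ext ?_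
    rw [Fin.val_cast_of_lt]
    · rw [hva]
      omega
    · rw [hva]
      have := (m k).isLt
      omega
  · -- right_inv
    intro M hM
    rw [Finset.mem_filter] at hM
    obtain ⟨-, hSA⟩ := hM
    have hKL : ∀ k : Fin n, (n - 1 - (k:ℕ)) ≤ ((M k):ℕ) := by
      intro k
      have hkl : k ≤ l := by
        rw [Fin.le_def, hl]
        have := k.isLt
        omega
      have := strictAnti_quant hSA hkl
      rw [hl] at this
      omega
    funext k
    have hv : ((((((M k):ℕ) - (n - 1 - (k:ℕ))) : ℕ) : Fin (N+1)) : ℕ)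
        = ((M k):ℕ) - (n - 1 - (k:ℕ)) :=
      Fin.val_cast_of_lt (by have := (M k).isLt; omega)
    refine Fin.ext ?_
    rw [Fin.val_cast_of_lt]
    · rw [hv]
      have := hKL k
      omega
    · rw [hv]
      have := (M k).isLt
      have := hKL k
      omega
  · -- values
    intro m hm
    rw [Finset.mem_filter] at hm
    obtain ⟨-, hA, hg⟩ := hm
    have hval : ∀ k : Fin n, ((((((m k):ℕ) + (n - 1 - (k:ℕ))) : ℕ) : Fin (N+1)) : ℕ)
        = ((m k):ℕ) + (n - 1 - (k:ℕ)) :=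
      fun k => Fin.val_cast_of_lt (by have := hg k; omega)
    have hz : (n : ℕ) - 1 - (l:ℕ) = 0 := by omega
    refine congrArg _ ?_
    simp only [hval, hz, Nat.add_zero, Fin.cast_val_eq_self]

theorem rhs_combine {N : ℕ} (hn : 1 ≤ n) (l : Fin n) (T : (Fin n → Fin (N+1)) → R n) :
    (1 - cc n)^(n-1) *
      ((∑ m : Fin n → Fin (N+1),
          if (Antitone fun i => ((m i):ℕ)) ∧ ((m l):ℕ) = 0 then T m else 0)
       + (1 - cc n) *
         (∑ m : Fin n → Fin (N+1),
          if (Antitone fun i => ((m i):ℕ)) ∧ 0 < ((m l):ℕ) then T m else 0))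
    = ∑ m : Fin n → Fin (N+1),
        if Antitone (fun i => ((m i):ℕ)) then
          (if ((m l):ℕ) = 0 then (1 - cc n)^(n-1) else (1 - cc n)^n) * T m
        else 0 := by
  rw [mul_add, ← mul_assoc, ← pow_succ, Nat.sub_add_cancel hn, Finset.mul_sum, Finset.mul_sum,
    ← Finset.sum_add_distrib]
  refine Finset.sum_congr rfl fun m _ => ?_
  by_cases hA : Antitone fun i => ((m i):ℕ)
  · by_cases h0 : ((m l):ℕ) = 0
    · rw [if_pos ⟨hA, h0⟩, if_neg (by rintro ⟨-, h⟩; omega), mul_zero, add_zero,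
        if_pos hA, if_pos h0]
    · rw [if_neg (fun h => h0 h.2), mul_zero, zero_add,
        if_pos ⟨hA, Nat.pos_of_ne_zero h0⟩, if_pos hA, if_neg h0]
  · rw [if_neg (fun h => hA h.1), if_neg (fun h => hA h.1), if_neg hA, mul_zero, mul_zero,
      add_zero]

end Setting2
end Frob


/-- Frobenius's determinant identity, in `(ℤ[c])[[u_1,…,u_n,v_1,…,v_n]]`: if
`B i j = (1 - c u_i v_j)/(1 - u_i v_j)` (characterized by
`B i j * (1 - u_i v_j) = 1 - c u_i v_j`), then
`det B = V(u) V(v) (1-c)^{n-1} (∑_{m : m_n = 0} s_m(u) s_m(v) + (1-c) ∑_{m : m_n > 0} s_m(u) s_m(v))`,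
stated coefficient-wise, with `V(u) s_m(u) = det (u_j^{m_i+n-i})`. -/
theorem stmt14 (n : ℕ) (hn : 1 ≤ n)
    (B : Matrix (Fin n) (Fin n) (MvPowerSeries (Fin n ⊕ Fin n) (Polynomial ℤ)))
    (hB : ∀ i j, B i j *
        (1 - MvPowerSeries.X (Sum.inl i) * MvPowerSeries.X (Sum.inr j)) =
      1 - (MvPowerSeries.C (σ := Fin n ⊕ Fin n) (R := Polynomial ℤ)) Polynomial.X *
        MvPowerSeries.X (Sum.inl i) * MvPowerSeries.X (Sum.inr j))
    (d : (Fin n ⊕ Fin n) →₀ ℕ) :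
    MvPowerSeries.coeff d B.det =
    MvPowerSeries.coeff d
      ((1 - (MvPowerSeries.C (σ := Fin n ⊕ Fin n) (R := Polynomial ℤ)) Polynomial.X) ^ (n - 1) *
        ((∑ m : Fin n → Fin ((d.sum fun _ e => e) + 1),
          if Antitone (fun i => (m i : ℕ)) ∧ (m ⟨n - 1, by omega⟩ : ℕ) = 0 then
            Matrix.det (Matrix.of fun i j : Fin n =>
              (MvPowerSeries.X (Sum.inl j) :
                MvPowerSeries (Fin n ⊕ Fin n) (Polynomial ℤ)) ^
                ((m i : ℕ) + (n - 1 - (i : ℕ)))) *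
            Matrix.det (Matrix.of fun i j : Fin n =>
              (MvPowerSeries.X (Sum.inr j) :
                MvPowerSeries (Fin n ⊕ Fin n) (Polynomial ℤ)) ^
                ((m i : ℕ) + (n - 1 - (i : ℕ))))
          else 0) +
        (1 - (MvPowerSeries.C (σ := Fin n ⊕ Fin n) (R := Polynomial ℤ)) Polynomial.X) *
        (∑ m : Fin n → Fin ((d.sum fun _ e => e) + 1),
          if Antitone (fun i => (m i : ℕ)) ∧ 0 < (m ⟨n - 1, by omega⟩ : ℕ) then
            Matrix.det (Matrix.of fun i j : Fin n =>
              (MvPowerSeries.X (Sum.inl j) :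
                MvPowerSeries (Fin n ⊕ Fin n) (Polynomial ℤ)) ^
                ((m i : ℕ) + (n - 1 - (i : ℕ)))) *
            Matrix.det (Matrix.of fun i j : Fin n =>
              (MvPowerSeries.X (Sum.inr j) :
                MvPowerSeries (Fin n ⊕ Fin n) (Polynomial ℤ)) ^
                ((m i : ℕ) + (n - 1 - (i : ℕ))))
          else 0))) := by
  have h2 := Frob.coeff_eq_of_sub_mem_Jd
    (Frob.det_congr_Jd d B (Frob.B' n (d.sum fun _ e => e))
      (fun i j => Frob.sub_Bp_mem d i j (B i j) (hB i j)))
  rw [h2, Frob.detBp_final (⟨n - 1, by omega⟩ : Fin n) rfl,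
    ← Frob.coeff_match hn d (⟨n - 1, by omega⟩ : Fin n) rfl]
  exact congrArg _ (Frob.rhs_combine hn (⟨n - 1, by omega⟩ : Fin n) _).symm
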